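/- Let (X,d) be a nonempty compact metric space and let f_k, f : X → X be continuous maps with f_k → f uniformly on X as k → ∞. Equip X^ℕ with the metric d̂(ẑ, ŵ) := Σ_{n≥0} 2^{−n} d(z₋ₙ, w₋ₙ). Then sup_{ẑ ∈ N_{f_k}} inf_{ŵ ∈ N_f} d̂(ẑ, ŵ) → 0 as k → ∞ (where the supremum over an empty set is taken as 0); that is, the natural extensions N_{f_k} eventually lie in any d̂-neighborhood of N_f. -/
import Mathlib

/-- The natural extension of `f : X → X`: the space of full backward orbits
`ẑ = (z₀, z₋₁, z₋₂, …)` with `f (z₋ₙ₋₁) = z₋ₙ`, inside the product `X^ℕ`. -/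
def natExt {X : Type*} (f : X → X) : Set (ℕ → X) := {z | ∀ n, f (z (n + 1)) = z n}

/-- The metric `d̂(ẑ, ŵ) = Σₙ 2⁻ⁿ d(z₋ₙ, w₋ₙ)` on `X^ℕ`. -/
noncomputable def dhat {X : Type*} [MetricSpace X] (z w : ℕ → X) : ℝ :=
  ∑' n : ℕ, dist (z n) (w n) / 2 ^ n

lemma dhat_nonneg {X : Type*} [MetricSpace X] (z w : ℕ → X) : 0 ≤ dhat z w :=
  tsum_nonneg fun n => div_nonneg dist_nonneg (by positivity)

/-- If `f_k → f` uniformly on a nonempty compact metric space, then the natural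
extensions `N_{f_k}` eventually lie in any `d̂`-neighborhood of `N_f`:
`sup_{ẑ ∈ N_{f_k}} inf_{ŵ ∈ N_f} d̂(ẑ, ŵ) → 0` (with `sup ∅ = 0`). -/
theorem natExt_semicontinuous_of_tendstoUniformly {X : Type*} [MetricSpace X]
    [CompactSpace X] [Nonempty X]
    (F : ℕ → X → X) (f : X → X)
    (hF : ∀ k, Continuous (F k)) (hf : Continuous f)
    (hunif : TendstoUniformly F f Filter.atTop) :
    Filter.Tendsto
      (fun k => ⨆ z : natExt (F k), ⨅ w : natExt f, dhat (z : ℕ → X) (w : ℕ → X))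
      Filter.atTop (nhds 0) := by
  classical
  obtain ⟨C, hC⟩ : ∃ C : ℝ, ∀ x y : X, dist x y ≤ C := by
    obtain ⟨C, hC⟩ := Metric.isBounded_iff.mp (isCompact_univ (X := X)).isBounded
    exact ⟨C, fun x y => hC (Set.mem_univ x) (Set.mem_univ y)⟩
  have hsum : Summable (fun n : ℕ => C / 2 ^ n) := by
    simpa [div_eq_mul_inv, ← inv_pow] using (summable_geometric_two.mul_left C)
  set g := fun k => ⨆ z : natExt (F k), ⨅ w : natExt f, dhat (z : ℕ → X) (w : ℕ → X)
    with hgdef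
  have hg0 : ∀ k, 0 ≤ g k := fun k =>
    Real.iSup_nonneg fun z => Real.iInf_nonneg fun w => dhat_nonneg _ _
  rw [Metric.tendsto_atTop]
  intro ε hε
  by_contra hcon
  push_neg at hcon
  have hfreq : ∃ᶠ k in Filter.atTop, ε ≤ g k := by
    rw [Filter.frequently_atTop]
    intro N
    obtain ⟨k, hk, hk2⟩ := hcon N
    refine ⟨k, hk, ?_⟩
    rw [Real.dist_eq, sub_zero, abs_of_nonneg (hg0 k)] at hk2
    exact hk2
  obtain ⟨φ, hφ, hφ2⟩ := Filter.extraction_of_frequently_atTop hfreq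
  have hz : ∀ j, ∃ z : natExt (F (φ j)), ε / 2 < ⨅ w : natExt f, dhat (z : ℕ → X) w := by
    intro j
    rcases isEmpty_or_nonempty (natExt (F (φ j))) with h | h
    · exfalso
      have h0 : g (φ j) = 0 := Real.iSup_of_isEmpty _
      linarith [hφ2 j]
    · exact exists_lt_of_lt_ciSup (lt_of_lt_of_le (by linarith) (hφ2 j))
  choose z hzlt using hz
  set s : ℕ → (ℕ → X) := fun j => (z j : ℕ → X) with hsdef
  obtain ⟨a, ψ, hψ, ha⟩ := CompactSpace.tendsto_subseq s
  have hpt : ∀ n, Filter.Tendsto (fun j => s (ψ j) n) Filter.atTop (nhds (a n)) :=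
    fun n => tendsto_pi_nhds.mp ha n
  have htend : Filter.Tendsto (fun j => φ (ψ j)) Filter.atTop Filter.atTop :=
    (hφ.comp hψ).tendsto_atTop
  have hunif' : TendstoUniformly (fun j => F (φ (ψ j))) f Filter.atTop := by
    intro u hu
    exact htend.eventually (hunif u hu)
  have haf : a ∈ natExt f := by
    intro n
    have h1 : Filter.Tendsto (fun j => F (φ (ψ j)) (s (ψ j) (n + 1))) Filter.atTop
        (nhds (f (a (n + 1)))) :=
      hunif'.tendsto_comp hf.continuousAt (hpt (n + 1))
    have h2 : ∀ j, F (φ (ψ j)) (s (ψ j) (n + 1)) = s (ψ j) n := fun j => (z (ψ j)).2 n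
    exact tendsto_nhds_unique ((Filter.tendsto_congr h2).mp h1) (hpt n)
  have hd : Filter.Tendsto (fun j => dhat (s (ψ j)) a) Filter.atTop (nhds 0) := by
    have h0 : (0 : ℝ) = ∑' n : ℕ, (fun _ : ℕ => (0 : ℝ)) n := by simp
    rw [h0]
    refine tendsto_tsum_of_dominated_convergence hsum (fun n => ?_) ?_
    · have := ((hpt n).dist (tendsto_const_nhds (x := a n))).div_const ((2 : ℝ) ^ n)
      simpa using this
    · filter_upwards with j n
      rw [Real.norm_eq_abs, abs_of_nonneg (div_nonneg dist_nonneg (by positivity))]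
      exact div_le_div_of_nonneg_right (hC _ _) (by positivity) |>.trans_eq rfl
  have hbdd : BddBelow (Set.range fun w : natExt f => dhat (s (ψ 0)) (w : ℕ → X)) := by
    exact ⟨0, by rintro x ⟨w, rfl⟩; exact dhat_nonneg _ _⟩
  have hlt : ∀ j, ε / 2 < dhat (s (ψ j)) a := by
    intro j
    refine lt_of_lt_of_le (hzlt (ψ j)) ?_
    exact ciInf_le ⟨0, by rintro x ⟨w, rfl⟩; exact dhat_nonneg _ _⟩ (⟨a, haf⟩ : natExt f)
  have hev := hd.eventually_lt_const (by linarith : (0 : ℝ) < ε / 2)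
  obtain ⟨j, hj⟩ := hev.exists
  exact absurd (hlt j) (not_lt.mpr hj.le)
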